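/- Let d ∈ ℕ, let F : (Fin d → ℝ) → (Fin d → ℝ), and let S : ℝ → (Fin d → ℝ) → (Fin d → ℝ) be a flow of F, i.e. S 0 x = x for all x and for every x the curve t ↦ S t x is differentiable at every t ∈ ℝ with derivative F (S t x). Let λ ∈ ℂ and let g : (Fin d → ℝ) → ℂ be differentiable. If g (S t x) = Complex.exp (λ * t) * g x for all t ∈ ℝ and all x, then for every x the Fréchet derivative of g at x applied to the vector F x equals λ * g x; that is, g solves the linear PDE ∇g · F = λ g. (Forward direction of Theorem 2 of the paper.) -/

import Mathlib

/-- Forward direction of Theorem 2 of the paper: a differentiable Koopman eigenfunction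
of the flow S of the vector field F with eigenvalue λ solves the linear PDE ∇g · F = λ g. -/
theorem koopman_eigenfunction_solves_pde
    {d : ℕ} (F : (Fin d → ℝ) → (Fin d → ℝ))
    (S : ℝ → (Fin d → ℝ) → (Fin d → ℝ))
    (hS0 : ∀ x, S 0 x = x)
    (hS : ∀ x : Fin d → ℝ, ∀ t : ℝ, HasDerivAt (fun s => S s x) (F (S t x)) t)
    (lam : ℂ) (g : (Fin d → ℝ) → ℂ) (hg : Differentiable ℝ g)
    (heig : ∀ t : ℝ, ∀ x : Fin d → ℝ, g (S t x) = Complex.exp (lam * t) * g x) :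
    ∀ x : Fin d → ℝ, fderiv ℝ g x (F x) = lam * g x := by
  intro x
  have h1 : HasDerivAt (fun t => g (S t x)) (fderiv ℝ g x (F x)) 0 := by
    have := ((hg (S 0 x)).hasFDerivAt.comp_hasDerivAt 0 (hS x 0))
    rw [hS0 x] at this
    exact this
  have h2 : HasDerivAt (fun t : ℝ => Complex.exp (lam * t) * g x) (lam * g x) 0 := by
    have he : HasDerivAt (fun t : ℝ => Complex.exp (lam * t)) (lam * Complex.exp (lam * 0)) 0 := by
      have : HasDerivAt (fun t : ℝ => lam * (t : ℂ)) lam 0 := by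
        simpa using (Complex.ofRealCLM.hasDerivAt (x := (0:ℝ))).const_mul lam
      simpa [mul_comm] using this.cexp
    simpa [mul_comm] using he.mul_const (g x)
  have h1' : HasDerivAt (fun t : ℝ => Complex.exp (lam * t) * g x) (fderiv ℝ g x (F x)) 0 := by
    apply h1.congr_of_eventuallyEq
    filter_upwards with t
    exact (heig t x).symm
  exact h1'.unique h2
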